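/- Let p > 1, q > 1 - 1/p, b > 0, c > 0. For λ large, the smallest positive root t₁(λ) of (t^p + b)^q = λ c t^(p-1) satisfies t₁(λ) = b^(q/(p-1)) (λ c)^(-1/(p-1)) · (1 + (q/(p-1)) b^((pq-p+1)/(p-1)) (λc)^(-p/(p-1)) (1 + o(1))) as λ → ∞. -/

import Mathlib

open Real Filter

theorem stmt15 (p q b c : ℝ) (hp : 1 < p) (hq : q > 1 - 1/p)
    (hb : 0 < b) (hc : 0 < c)
    (t₁ : ℝ → ℝ)
    (hroot : ∀ᶠ lam in atTop, 0 < t₁ lam ∧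
      ((t₁ lam) ^ p + b) ^ q = lam * c * (t₁ lam) ^ (p-1) ∧
      ∀ s : ℝ, 0 < s → (s ^ p + b) ^ q = lam * c * s ^ (p-1) → t₁ lam ≤ s) :
    Tendsto
      (fun lam =>
        (t₁ lam / (b ^ (q/(p-1)) * (lam * c) ^ (-1/(p-1))) - 1) /
          ((q/(p-1)) * b ^ ((p*q - p + 1)/(p-1)) * (lam * c) ^ (-p/(p-1))))
      atTop (nhds 1) := by
  have hp0 : (0:ℝ) < p := by linarith
  have hp1 : (0:ℝ) < p - 1 := by linarith
  have hq0 : 0 < q := by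
    have h1 : 1/p < 1 := by rw [div_lt_one hp0]; exact hp
    linarith
  set r : ℝ := q / (p - 1) with hrdef
  have hr0 : 0 < r := div_pos hq0 hp1
  have htpos : ∀ᶠ lam in atTop, 0 < t₁ lam := hroot.mono fun lam h => h.1
  -- Step 1: t₁ → 0
  have ht0 : Tendsto t₁ atTop (nhds 0) := by
    rw [Metric.tendsto_nhds]
    intro ε hε
    set e : ℝ := min (ε/2) 1 with he
    have he0 : 0 < e := lt_min (by linarith) one_pos
    have heε : e < ε := lt_of_le_of_lt (min_le_left _ _) (by linarith)
    filter_upwards [hroot, eventually_ge_atTop ((e^p + b)^q / (c * e^(p-1)))]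
      with lam hlam h4
    obtain ⟨h1, h2, h3⟩ := hlam
    set g : ℝ → ℝ := fun t => (t^p + b)^q - lam * c * t^(p-1) with hg
    have hcont : ContinuousOn g (Set.Icc 0 e) := by
      intro x hx
      have hxp : ContinuousAt (fun t : ℝ => t ^ p) x :=
        Real.continuousAt_rpow_const x p (Or.inr hp0.le)
      have hxnn : 0 ≤ x := hx.1
      have hpos : 0 < x ^ p + b := by
        have := Real.rpow_nonneg hxnn p
        linarith
      have hout : ContinuousAt (fun t : ℝ => (t^p + b)^q) x :=
        (hxp.add continuousAt_const).rpow_const (Or.inl hpos.ne')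
      have hsec : ContinuousAt (fun t : ℝ => lam * c * t^(p-1)) x :=
        continuousAt_const.mul (Real.continuousAt_rpow_const x (p-1) (Or.inr hp1.le))
      exact (hout.sub hsec).continuousWithinAt
    have hg0 : g 0 = b ^ q := by
      simp [hg, Real.zero_rpow hp0.ne', Real.zero_rpow hp1.ne']
    have hge : g e ≤ 0 := by
      have hce : 0 < c * e^(p-1) := mul_pos hc (Real.rpow_pos_of_pos he0 _)
      have := (div_le_iff₀ hce).mp h4
      simp only [hg]
      nlinarith
    have h0mem : (0:ℝ) ∈ Set.Icc (g e) (g 0) := by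
      constructor
      · exact hge
      · rw [hg0]; positivity
    obtain ⟨s, hs, hgs⟩ := intermediate_value_Icc' he0.le hcont h0mem
    have hs0 : 0 < s := by
      rcases lt_or_eq_of_le hs.1 with h | h
      · exact h
      · exfalso
        rw [← h] at hgs
        rw [hg0] at hgs
        exact absurd hgs (Real.rpow_pos_of_pos hb q).ne'
    have hroots : (s ^ p + b) ^ q = lam * c * s ^ (p-1) := by
      have := hgs
      simp only [hg] at this
      linarith [this]
    have hle : t₁ lam ≤ s := h3 s hs0 hroots
    rw [Real.dist_eq, sub_zero, abs_of_pos h1]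
    calc t₁ lam ≤ s := hle
      _ ≤ e := hs.2
      _ < ε := heε
  -- Step 2: eventual identity
  have key : ∀ᶠ lam in atTop,
      (t₁ lam / (b ^ r * (lam * c) ^ (-1/(p-1))) - 1) /
          (r * b ^ ((p*q - p + 1)/(p-1)) * (lam * c) ^ (-p/(p-1)))
        = ((1 + t₁ lam ^ p / b)^r - 1) * (1 + t₁ lam ^ p / b)^(r*p)
            / (r * (t₁ lam ^ p / b)) := by
    filter_upwards [hroot, eventually_gt_atTop 0] with lam hlam hlampos
    obtain ⟨h1, h2, _⟩ := hlam
    set t := t₁ lam with htdef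
    set L := lam * c with hLdef
    have hL0 : 0 < L := mul_pos hlampos hc
    have htp : 0 < t ^ p := Real.rpow_pos_of_pos h1 p
    set u := t ^ p / b with hudef
    have hu0 : 0 < u := div_pos htp hb
    have h1u : (0:ℝ) < 1 + u := by linarith
    set A := b ^ r * L ^ (-1/(p-1)) with hAdef
    have hA0 : 0 < A :=
      mul_pos (Real.rpow_pos_of_pos hb r) (Real.rpow_pos_of_pos hL0 _)
    have hsplit : t ^ p + b = b * (1 + u) := by
      rw [hudef]
      field_simp
      ring
    have hkey : t = A * (1+u)^r := by
      have h2' : b ^ q * (1+u)^q = L * t^(p-1) := by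
        rw [← Real.mul_rpow hb.le h1u.le, ← hsplit, h2]
      have ht' : t ^ (p-1) = b ^ q * (1+u)^q / L := by
        rw [eq_div_iff hL0.ne']
        linarith [h2']
      have hback : t = (t ^ (p-1)) ^ (1/(p-1)) := by
        rw [← Real.rpow_mul h1.le, mul_one_div, div_self hp1.ne', Real.rpow_one]
      rw [hback, ht', Real.div_rpow (by positivity) hL0.le,
        Real.mul_rpow (Real.rpow_nonneg hb.le q) (Real.rpow_nonneg h1u.le q),
        ← Real.rpow_mul hb.le, ← Real.rpow_mul h1u.le, mul_one_div,
        hAdef, hrdef, show -1/(p-1) = -(1/(p-1)) by ring, Real.rpow_neg hL0.le,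
        div_eq_mul_inv]
      ring
    have htA : t / A = (1+u)^r := by
      rw [hkey]; field_simp
    have hexp : (p*q - p + 1)/(p-1) = r*p - 1 := by
      rw [hrdef]; field_simp; ring
    have hAp : A ^ p = t ^ p / (1+u)^(r*p) := by
      rw [hkey, Real.mul_rpow hA0.le (Real.rpow_nonneg h1u.le r),
        ← Real.rpow_mul h1u.le]
      field_simp
    have hAp' : A ^ p = b ^ (r*p) * L ^ (-p/(p-1)) := by
      rw [hAdef, Real.mul_rpow (Real.rpow_nonneg hb.le r) (Real.rpow_nonneg hL0.le _),
        ← Real.rpow_mul hb.le, ← Real.rpow_mul hL0.le,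
        show -1/(p-1) * p = -p/(p-1) by ring]
    have hDen : b ^ ((p*q - p + 1)/(p-1)) * L ^ (-p/(p-1)) = u / (1+u)^(r*p) := by
      have h1up : (0:ℝ) < (1+u)^(r*p) := Real.rpow_pos_of_pos h1u _
      calc b ^ ((p*q - p + 1)/(p-1)) * L ^ (-p/(p-1))
          = b ^ (r*p) * L ^ (-p/(p-1)) / b := by
            rw [hexp, Real.rpow_sub hb, Real.rpow_one]; ring
        _ = A ^ p / b := by rw [hAp']
        _ = t ^ p / (1+u)^(r*p) / b := by rw [hAp]
        _ = u / (1+u)^(r*p) := by rw [hudef]; ring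
    rw [htA, mul_assoc, hDen]
    have h1up : (0:ℝ) < (1+u)^(r*p) := Real.rpow_pos_of_pos h1u _
    have hune : u ≠ 0 := hu0.ne'
    have hrne : r ≠ 0 := hr0.ne'
    have hPne : (1+u)^(r*p) ≠ 0 := h1up.ne'
    field_simp
  -- Step 3: limit of F at 0⁺
  have hF : Tendsto (fun u : ℝ => ((1+u)^r - 1) * (1+u)^(r*p) / (r*u))
      (nhdsWithin 0 (Set.Ioi 0)) (nhds 1) := by
    have hd : HasDerivAt (fun u : ℝ => (1+u)^r) r 0 := by
      have h : HasDerivAt (fun x : ℝ => x ^ r) (r * 1 ^ (r - 1)) (1 + id (0:ℝ)) := by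
        simpa using Real.hasDerivAt_rpow_const (x := (1:ℝ)) (p := r) (Or.inl one_ne_zero)
      have h2 := h.comp 0 ((hasDerivAt_id (0:ℝ)).const_add 1)
      exact h2.congr_deriv (by simp)
    have hslope : Tendsto (fun u : ℝ => ((1+u)^r - 1)/u)
        (nhdsWithin 0 {(0:ℝ)}ᶜ) (nhds r) := by
      have := hasDerivAt_iff_tendsto_slope.mp hd
      simpa [slope_fun_def, Real.one_rpow, div_eq_inv_mul] using this
    have h1 : Tendsto (fun u : ℝ => ((1+u)^r - 1)/u)
        (nhdsWithin 0 (Set.Ioi 0)) (nhds r) :=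
      hslope.mono_left (nhdsWithin_mono 0 (fun x hx => ne_of_gt hx))
    have h2 : Tendsto (fun u : ℝ => (1+u)^(r*p)) (nhdsWithin 0 (Set.Ioi 0)) (nhds 1) := by
      have hca : ContinuousAt (fun u : ℝ => (1+u)^(r*p)) 0 :=
        (continuousAt_const.add continuousAt_id).rpow_const (Or.inl (by norm_num))
      have h : Tendsto (fun u : ℝ => (1+u)^(r*p)) (nhdsWithin 0 (Set.Ioi 0))
          (nhds (((1:ℝ)+0)^(r*p))) := (hca.tendsto).mono_left nhdsWithin_le_nhds
      simpa using h
    have hmain := (h1.mul h2).div_const r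
    have hlim : (r * 1) / r = 1 := by field_simp
    rw [hlim] at hmain
    apply hmain.congr'
    filter_upwards [self_mem_nhdsWithin] with u hu
    rw [div_mul_eq_mul_div, div_div, mul_comm u r]
  -- Step 4: u(lam) → 0⁺
  have hu_t : Tendsto (fun lam => t₁ lam ^ p / b) atTop (nhdsWithin 0 (Set.Ioi 0)) := by
    rw [tendsto_nhdsWithin_iff]
    constructor
    · have hc0 : ContinuousAt (fun t : ℝ => t ^ p) 0 :=
        Real.continuousAt_rpow_const 0 p (Or.inr hp0.le)
      have h := (hc0.tendsto.comp ht0).div_const b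
      simpa [Real.zero_rpow hp0.ne'] using h
    · filter_upwards [htpos] with lam h1
      exact Set.mem_Ioi.mpr (div_pos (Real.rpow_pos_of_pos h1 p) hb)
  -- Combine
  have hcomp : Tendsto
      (fun lam => ((1 + t₁ lam ^ p / b)^r - 1) * (1 + t₁ lam ^ p / b)^(r*p)
        / (r * (t₁ lam ^ p / b))) atTop (nhds 1) := hF.comp hu_t
  exact Filter.Tendsto.congr' (key.mono fun _ h => h.symm) hcomp
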